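/- The symmetric Pascal matrix P(n) is positive definite for every n. -/

import Mathlib

open Finset Matrix

lemma pascal_sum_range (i j : ℕ) :
    ∑ k ∈ Finset.range (i + 1), i.choose k * j.choose k = (i + j).choose i := by
  rw [Nat.add_choose_eq, Finset.Nat.sum_antidiagonal_eq_sum_range_succ_mk]
  have h := Finset.sum_range_reflect (fun k => i.choose k * j.choose (i - k)) (i + 1)
  rw [← h]
  refine Finset.sum_congr rfl fun k hk => ?_
  rw [Finset.mem_range] at hk
  have hk' : k ≤ i := Nat.lt_succ_iff.mp hk
  simp only [Nat.add_sub_cancel]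
  rw [Nat.choose_symm hk', Nat.sub_sub_self hk']

lemma pascal_sum_fin (n i j : ℕ) (hi : i < n) :
    ∑ k ∈ Finset.range n, i.choose k * j.choose k = (i + j).choose i := by
  rw [← pascal_sum_range i j]
  refine (Finset.sum_subset ?_ ?_).symm
  · exact Finset.range_subset_range.mpr hi
  · intro k _ hk
    rw [Finset.mem_range, not_lt] at hk
    rw [Nat.choose_eq_zero_of_lt hk, zero_mul]

/-- The symmetric Pascal matrix is positive definite over `ℝ`. -/
theorem symm_pascal_posDef (n : ℕ) :
    (Matrix.of fun i j : Fin n => ((Nat.choose (i + j) i : ℝ))).PosDef := by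
  set L : Matrix (Fin n) (Fin n) ℝ := Matrix.of fun i k : Fin n => ((Nat.choose i k : ℝ)) with hL
  have hP : (Matrix.of fun i j : Fin n => ((Nat.choose (i + j) i : ℝ))) = L * Lᵀ := by
    ext i j
    simp only [Matrix.mul_apply, Matrix.transpose_apply, hL, Matrix.of_apply]
    rw [Fin.sum_univ_eq_sum_range (fun k => ((i : ℕ).choose k : ℝ) * ((j : ℕ).choose k : ℝ))]
    push_cast [← pascal_sum_fin n i j i.isLt]
    rfl
  have hdet : L.det = 1 := by
    have htri : L.BlockTriangular OrderDual.toDual := by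
      intro i j hij
      simp only [hL, Matrix.of_apply]
      norm_cast
      exact Nat.choose_eq_zero_of_lt hij
    rw [Matrix.det_of_lowerTriangular L htri]
    simp [hL]
  have hunit : IsUnit Lᵀ := by
    apply (Matrix.isUnit_iff_isUnit_det _).mpr
    rw [Matrix.det_transpose, hdet]
    exact isUnit_one
  rw [hP]
  rw [Matrix.posDef_iff_dotProduct_mulVec]
  constructor
  · exact Matrix.isHermitian_mul_conjTranspose_self L
  · intro x hx
    have hz : Lᵀ *ᵥ x ≠ 0 := by
      intro h
      apply hx
      have hinj := Matrix.mulVec_injective_iff_isUnit.mpr hunit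
      exact hinj (by rw [h, Matrix.mulVec_zero])
    have hcalc : x ⬝ᵥ (L * Lᵀ) *ᵥ x = (Lᵀ *ᵥ x) ⬝ᵥ (Lᵀ *ᵥ x) := by
      rw [← Matrix.mulVec_mulVec, Matrix.dotProduct_mulVec, ← Matrix.mulVec_transpose]
    have hsx : star x = x := by simp
    rw [hsx, hcalc, ← star_trivial (Lᵀ *ᵥ x)]
    exact Matrix.dotProduct_self_star_pos_iff.mpr hz
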